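/- arXiv:1009.5081 — 5 statements merged into one kernel-verified Lean document; each statement's English description precedes it below -/
import Mathlib

section
/- Let f be a transcendental entire function, R > 0 with M(r) > r for r ≥ R, and define the fast escaping set A(f) = ⋃_{L ∈ ℕ} A_R^{-L}(f). Then A(f) is completely invariant under f: f(A(f)) ⊆ A(f) and f^{-1}(A(f)) ⊆ A(f). -/
open Complex Filter Set Function

noncomputable def maxMod (f : ℂ → ℂ) (r : ℝ) : ℝ :=
  sSup ((fun z => ‖f z‖) '' {z : ℂ | ‖z‖ = r})

def TranscendentalEntire (f : ℂ → ℂ) : Prop :=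
  Differentiable ℂ f ∧ ¬ ∃ p : Polynomial ℂ, ∀ z, f z = p.eval z

noncomputable def ALevel (f : ℂ → ℂ) (R : ℝ) (L : ℤ) : Set ℂ :=
  {z : ℂ | ∀ n : ℕ, 0 ≤ (n : ℤ) + L →
    ‖f^[n] z‖ ≥ (maxMod f)^[((n : ℤ) + L).toNat] R}

noncomputable def Afast (f : ℂ → ℂ) (R : ℝ) : Set ℂ :=
  ⋃ L : ℕ, ALevel f R (-(L : ℤ))

lemma maxMod_iter_ge (f : ℂ → ℂ) (R : ℝ) (hM : ∀ r ≥ R, maxMod f r > r) :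
    ∀ k : ℕ, R ≤ (maxMod f)^[k] R := by
  intro k
  induction k with
  | zero => simp
  | succ k ih =>
    rw [Function.iterate_succ_apply']
    exact ih.trans (hM _ ih).le

lemma maxMod_iter_mono (f : ℂ → ℂ) (R : ℝ) (hM : ∀ r ≥ R, maxMod f r > r) :
    ∀ k : ℕ, (maxMod f)^[k] R ≤ (maxMod f)^[k + 1] R := by
  intro k
  rw [Function.iterate_succ_apply']
  exact (hM _ (maxMod_iter_ge f R hM k)).le

theorem Afast_completely_invariant (f : ℂ → ℂ) (hf : TranscendentalEntire f)
    (R : ℝ) (hR : 0 < R) (hM : ∀ r ≥ R, maxMod f r > r) :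
    f '' (Afast f R) ⊆ Afast f R ∧ f ⁻¹' (Afast f R) ⊆ Afast f R := by
  constructor
  · rintro w ⟨z, hz, rfl⟩
    obtain ⟨L, hzL⟩ := mem_iUnion.mp hz
    refine mem_iUnion.mpr ⟨L, ?_⟩
    intro n hn
    have hLn : (L : ℤ) ≤ n := by omega
    have h1 := hzL (n + 1) (by push_cast; omega)
    have hkey : (((n : ℕ) + 1 : ℕ) : ℤ) + -(L : ℤ) = (((n : ℤ) + -(L : ℤ)) + 1) := by
      push_cast; ring
    rw [hkey] at h1
    have htn : (((n : ℤ) + -(L : ℤ)) + 1).toNat = ((n : ℤ) + -(L : ℤ)).toNat + 1 := by omega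
    rw [htn] at h1
    rw [Function.iterate_succ_apply] at h1
    exact le_trans (maxMod_iter_mono f R hM _) h1
  · intro z hz
    obtain ⟨L, hzL⟩ := mem_iUnion.mp hz
    refine mem_iUnion.mpr ⟨L + 1, ?_⟩
    intro n hn
    have hLn : (L : ℤ) + 1 ≤ n := by push_cast at hn ⊢; omega
    obtain ⟨m, rfl⟩ : ∃ m : ℕ, n = m + 1 := ⟨n - 1, by omega⟩
    have h1 := hzL m (by push_cast at hLn ⊢; omega)
    rw [Function.iterate_succ_apply]
    have : ((m : ℤ) + -(L : ℤ)).toNat = (((m + 1 : ℕ) : ℤ) + -((L + 1 : ℕ) : ℤ)).toNat := by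
      push_cast; omega
    rw [this] at h1
    exact h1
end

section
/- Let f be a transcendental entire function and let R' > R > 0 both satisfy M(r) > r for r ≥ R. Then ⋃_{L ∈ ℕ} A_{R'}^{-L}(f) = ⋃_{L ∈ ℕ} A_R^{-L}(f); that is, the fast escaping set A(f) is independent of the choice of R. -/
open Complex Filter Set Function

lemma sphere_set_eq (r : ℝ) : {z : ℂ | ‖z‖ = r} = Metric.sphere (0 : ℂ) r := by
  ext z; simp [Complex.norm_def, Metric.mem_sphere, dist_eq_norm,
    Complex.norm_def]

lemma maxMod_exists (f : ℂ → ℂ) (hc : Continuous f) {r : ℝ} (hr : 0 ≤ r) :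
    ∃ z : ℂ, ‖z‖ = r ∧ ‖f z‖ = maxMod f r ∧
      ∀ w : ℂ, ‖w‖ = r → ‖f w‖ ≤ maxMod f r := by
  have hS : {z : ℂ | ‖z‖ = r} = Metric.sphere (0 : ℂ) r := sphere_set_eq r
  have hcomp : IsCompact (Metric.sphere (0 : ℂ) r) := isCompact_sphere 0 r
  have hne : (Metric.sphere (0 : ℂ) r).Nonempty := NormedSpace.sphere_nonempty.mpr hr
  obtain ⟨z, hz, hsup, hge⟩ := hcomp.exists_sSup_image_eq_and_ge (f := fun z => ‖f z‖) hne
    ((continuous_norm.comp hc).continuousOn)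
  refine ⟨z, ?_, ?_, ?_⟩
  · simpa [Complex.norm_def, dist_eq_norm] using hz
  · rw [maxMod, hS, hsup]
  · intro w hw
    rw [maxMod, hS, hsup]
    apply hge
    rw [← hS]; exact hw

lemma maxMod_mono (f : ℂ → ℂ) (hf : Differentiable ℂ f) {r s : ℝ} (hr : 0 ≤ r) (hrs : r ≤ s) :
    maxMod f r ≤ maxMod f s := by
  rcases eq_or_lt_of_le hrs with h | h
  · rw [h]
  have hs : 0 < s := lt_of_le_of_lt hr h
  obtain ⟨z, hz, hmax, hle⟩ := maxMod_exists f hf.continuous hs.le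
  have hnonneg : 0 ≤ maxMod f s := hmax ▸ norm_nonneg _
  have hbd : ∀ w : ℂ, ‖w‖ = r → ‖f w‖ ≤ maxMod f s := by
    intro w hw
    have hcl : w ∈ closure (Metric.ball (0 : ℂ) s) := by
      rw [closure_ball (0 : ℂ) hs.ne']
      simp only [Metric.mem_closedBall, dist_eq_norm, sub_zero]
      rw [hw]; exact hrs
    have := Complex.norm_le_of_forall_mem_frontier_norm_le (Metric.isBounded_ball)
      (hf.diffContOnCl) (C := maxMod f s) (fun x hx => by
        rw [frontier_ball (0 : ℂ) hs.ne'] at hx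
        simp only [Metric.mem_sphere, dist_eq_norm, sub_zero] at hx
        exact hle x hx) hcl
    simpa using this
  rw [maxMod]
  apply Real.sSup_le _ hnonneg
  rintro x ⟨w, hw, rfl⟩
  exact hbd w hw

section main

variable {f : ℂ → ℂ} {R : ℝ}

lemma iter_ge_base (hM : ∀ r ≥ R, maxMod f r > r) :
    ∀ (k : ℕ) (t : ℝ), R ≤ t → R ≤ (maxMod f)^[k] t := by
  intro k
  induction k with
  | zero => intro t ht; simpa using ht
  | succ k ih =>
    intro t ht
    rw [Function.iterate_succ_apply']
    exact le_of_lt (lt_of_le_of_lt (ih t ht) (hM _ (ih t ht)))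

lemma iter_mono (hf : Differentiable ℂ f) (hR : 0 < R) (hM : ∀ r ≥ R, maxMod f r > r) :
    ∀ (k : ℕ) (a b : ℝ), R ≤ a → a ≤ b → (maxMod f)^[k] a ≤ (maxMod f)^[k] b := by
  intro k
  induction k with
  | zero => intro a b _ hab; simpa using hab
  | succ k ih =>
    intro a b ha hab
    rw [Function.iterate_succ_apply', Function.iterate_succ_apply']
    exact maxMod_mono f hf (le_trans hR.le (iter_ge_base hM k a ha)) (ih a b ha hab)

lemma iter_unbounded (hf : Differentiable ℂ f) (hR : 0 < R) (hM : ∀ r ≥ R, maxMod f r > r)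
    (R' : ℝ) : ∃ m : ℕ, R' ≤ (maxMod f)^[m] R := by
  by_contra hcon
  push_neg at hcon
  set a : ℕ → ℝ := fun m => (maxMod f)^[m] R with ha
  have haR : ∀ m, R ≤ a m := fun m => iter_ge_base hM m R le_rfl
  have hbdd : BddAbove (Set.range a) := ⟨R', by rintro x ⟨m, rfl⟩; exact (hcon m).le⟩
  set ℓ := sSup (Set.range a) with hℓ
  have hℓR : R ≤ ℓ := le_csSup hbdd ⟨0, rfl⟩
  have hℓpos : 0 < ℓ := lt_of_lt_of_le hR hℓR
  have haℓ : ∀ m, a m ≤ ℓ := fun m => le_csSup hbdd ⟨m, rfl⟩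
  have hMℓ : maxMod f ℓ > ℓ := hM ℓ hℓR
  obtain ⟨z, hz, hmax, _⟩ := maxMod_exists f hf.continuous hℓpos.le
  -- continuity of abs ∘ f at z
  have hcont : ContinuousAt (fun w => ‖f w‖) z :=
    (continuous_norm.comp hf.continuous).continuousAt
  have hε : (0 : ℝ) < maxMod f ℓ - ℓ := by linarith
  obtain ⟨δ, hδpos, hδ⟩ := Metric.continuousAt_iff.mp hcont _ hε
  -- pick n with ℓ - δ < a n
  obtain ⟨x, ⟨n, rfl⟩, hxn⟩ := exists_lt_of_lt_csSup (Set.range_nonempty a)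
    (show ℓ - δ < ℓ by linarith)
  set w := ((a n / ℓ : ℝ) : ℂ) * z with hw
  have hwabs : ‖w‖ = a n := by
    rw [hw, norm_mul, hz]
    simp only [Complex.norm_real, Real.norm_eq_abs]
    rw [_root_.abs_of_nonneg (div_nonneg (le_trans hR.le (haR n)) hℓpos.le)]
    field_simp
  have hdist : dist w z < δ := by
    rw [dist_eq_norm, hw]
    have : ((a n / ℓ : ℝ) : ℂ) * z - z = ((a n / ℓ - 1 : ℝ) : ℂ) * z := by
      push_cast; ring
    rw [this, norm_mul, Complex.norm_real, hz]
    rw [Real.norm_eq_abs, abs_of_nonpos (by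
      have : a n / ℓ ≤ 1 := (div_le_one hℓpos).mpr (haℓ n)
      linarith)]
    have : -(a n / ℓ - 1) * ℓ = ℓ - a n := by field_simp; ring
    rw [this]
    linarith
  have hbig := hδ hdist
  rw [hmax, Real.dist_eq] at hbig
  have hfw : ‖f w‖ > ℓ := by
    have := abs_lt.mp hbig
    linarith
  -- but |f w| ≤ maxMod f (a n) = a (n+1) ≤ ℓ
  obtain ⟨_, _, _, hle⟩ := maxMod_exists f hf.continuous (le_trans hR.le (haR n))
  have : ‖f w‖ ≤ maxMod f (a n) := hle w hwabs
  have han1 : maxMod f (a n) = a (n + 1) := by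
    rw [ha]; simp [Function.iterate_succ_apply']
  rw [han1] at this
  linarith [haℓ (n + 1)]

end main

theorem Afast_independent_of_R (f : ℂ → ℂ) (hf : TranscendentalEntire f)
    (R R' : ℝ) (hR : 0 < R) (hRR' : R < R') (hM : ∀ r ≥ R, maxMod f r > r) :
    Afast f R' = Afast f R := by
  obtain ⟨hdiff, -⟩ := hf
  have hmono := iter_mono hdiff hR hM
  ext z
  simp only [Afast, mem_iUnion]
  constructor
  · rintro ⟨L, hz⟩
    refine ⟨L, fun n hn => ?_⟩
    exact le_trans (hmono _ R R' le_rfl hRR'.le) (hz n hn)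
  · rintro ⟨L, hz⟩
    obtain ⟨m, hm⟩ := iter_unbounded hdiff hR hM R'
    refine ⟨L + m, fun n hn => ?_⟩
    have hn' : 0 ≤ (n : ℤ) + -(L : ℤ) := by push_cast at hn ⊢; omega
    have h1 := hz n hn'
    set k := ((n : ℤ) + -((L + m : ℕ) : ℤ)).toNat with hk
    have hkey : ((n : ℤ) + -(L : ℤ)).toNat = k + m := by
      rw [hk]; push_cast at hn ⊢; omega
    rw [hkey] at h1
    refine le_trans ?_ h1
    rw [Function.iterate_add_apply]
    exact hmono k R' ((maxMod f)^[m] R) hRR'.le hm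
end

section
/- Let f be a transcendental entire function, ε ∈ (0,1), and μ(r) = ε·M(r). Suppose R > 0 is such that μ(r) > r for r ≥ R. If z satisfies |f^{n+L}(z)| ≥ μ^n(R) for some L ∈ ℕ and all n ∈ ℕ, then z ∈ A(f). Conversely every z ∈ A(f) satisfies such an inequality. Hence A(f) = {z : ∃ L ∈ ℕ such that |f^{n+L}(z)| ≥ μ^n(R) for all n ∈ ℕ}. -/
open Complex Filter Set Function Topology

namespace AfastAux

variable {f : ℂ → ℂ}

lemma sphere_eq (r : ℝ) : {z : ℂ | ‖z‖ = r} = Metric.sphere (0:ℂ) r := by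
  ext z; simp [Complex.dist_eq]

lemma maxMod_bddAbove (hd : Differentiable ℂ f) (r : ℝ) :
    BddAbove ((fun z => ‖f z‖) '' {z : ℂ | ‖z‖ = r}) := by
  rw [sphere_eq]
  exact ((isCompact_sphere (0:ℂ) r).image
    (continuous_norm.comp hd.continuous)).bddAbove

lemma le_maxMod (hd : Differentiable ℂ f) {z : ℂ} {r : ℝ} (hz : ‖z‖ = r) :
    ‖f z‖ ≤ maxMod f r :=
  le_csSup (maxMod_bddAbove hd r) ⟨z, hz, rfl⟩

lemma maxMod_nonneg (hd : Differentiable ℂ f) {r : ℝ} (hr : 0 ≤ r) :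
    0 ≤ maxMod f r :=
  le_trans (norm_nonneg _) (le_maxMod hd (z := (r:ℂ)) (by simp [_root_.abs_of_nonneg hr]))

lemma exists_maxMod (hd : Differentiable ℂ f) {r : ℝ} (hr : 0 ≤ r) :
    ∃ z : ℂ, ‖z‖ = r ∧ ‖f z‖ = maxMod f r := by
  have hne : ({z : ℂ | ‖z‖ = r}).Nonempty := ⟨(r:ℂ), by simp [_root_.abs_of_nonneg hr]⟩
  have hcpt : IsCompact ((fun z => ‖f z‖) '' {z : ℂ | ‖z‖ = r}) := by
    rw [sphere_eq]
    exact (isCompact_sphere (0:ℂ) r).image (continuous_norm.comp hd.continuous)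
  have := hcpt.sSup_mem (hne.image _)
  obtain ⟨z, hz, hz'⟩ := this
  exact ⟨z, hz, hz'⟩

lemma le_maxMod_of_le (hd : Differentiable ℂ f) {z : ℂ} {s : ℝ} (hs : 0 < s)
    (hz : ‖z‖ ≤ s) : ‖f z‖ ≤ maxMod f s := by
  have h1 : ∀ w ∈ frontier (Metric.ball (0:ℂ) s), ‖f w‖ ≤ maxMod f s := by
    intro w hw
    rw [frontier_ball (0:ℂ) hs.ne'] at hw
    have : ‖w‖ = s := by simpa [Complex.dist_eq] using hw
    simpa using le_maxMod hd this
  have := Complex.norm_le_of_forall_mem_frontier_norm_le (Metric.isBounded_ball)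
    hd.diffContOnCl h1 (z := z) ?_
  · simpa using this
  · rw [closure_ball (0:ℂ) hs.ne']
    simpa [Complex.dist_eq] using hz

lemma maxMod_mono (hd : Differentiable ℂ f) {r s : ℝ} (h0 : 0 ≤ r) (hrs : r ≤ s) :
    maxMod f r ≤ maxMod f s := by
  rcases eq_or_lt_of_le (h0.trans hrs) with h | hs
  · have : r = s := le_antisymm hrs (h ▸ h0)
    exact this ▸ le_rfl
  · refine csSup_le (Set.Nonempty.image _ ⟨(r:ℂ), by simp [_root_.abs_of_nonneg h0]⟩) ?_
    rintro b ⟨z, hz, rfl⟩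
    exact le_maxMod_of_le hd hs (by rw [hz]; exact hrs)


lemma iter_ge {g : ℝ → ℝ} {a : ℝ} (hg : ∀ r ≥ a, r ≤ g r) (n : ℕ) : a ≤ g^[n] a := by
  induction n with
  | zero => simp
  | succ n ih => rw [Function.iterate_succ_apply']; exact ih.trans (hg _ ih)

lemma iter_mono {g : ℝ → ℝ} {a : ℝ} (hg : ∀ r ≥ a, r ≤ g r) :
    Monotone (fun n => g^[n] a) := by
  apply monotone_nat_of_le_succ
  intro n
  rw [Function.iterate_succ_apply']
  exact hg _ (iter_ge hg n)

lemma escape (hd : Differentiable ℂ f) {c a : ℝ} (hc : 0 < c) (ha : 0 < a)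
    (h : ∀ r ≥ a, r < c * maxMod f r) (B : ℝ) :
    ∃ k : ℕ, B ≤ (fun r => c * maxMod f r)^[k] a := by
  by_contra hcon
  push_neg at hcon
  set g : ℝ → ℝ := fun r => c * maxMod f r with hgdef
  have hg : ∀ r ≥ a, r ≤ g r := fun r hr => (h r hr).le
  set x : ℕ → ℝ := fun n => g^[n] a with hxdef
  have hxa : ∀ n, a ≤ x n := iter_ge hg
  have hmono : Monotone x := iter_mono hg
  have hbdd : BddAbove (range x) := ⟨B, by rintro _ ⟨n, rfl⟩; exact (hcon n).le⟩
  set L := ⨆ n, x n with hL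
  have hxL : ∀ n, x n ≤ L := fun n => le_ciSup hbdd n
  have haL : a ≤ L := (hxa 0).trans (hxL 0)
  have hLpos : 0 < L := ha.trans_le haL
  have htend : Tendsto x atTop (𝓝 L) := tendsto_atTop_ciSup hmono hbdd
  obtain ⟨z0, hz0, hz0f⟩ := exists_maxMod hd hLpos.le
  set w : ℕ → ℂ := fun n => ((x n / L : ℝ) : ℂ) * z0 with hw
  have hwabs : ∀ n, ‖w n‖ = x n := by
    intro n
    simp only [hw, norm_mul, Complex.norm_real, Real.norm_eq_abs, hz0]
    rw [_root_.abs_of_nonneg (div_nonneg (ha.le.trans (hxa n)) hLpos.le)]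
    field_simp
  have hwt : Tendsto w atTop (𝓝 z0) := by
    have h1 : Tendsto (fun n => (x n / L : ℝ)) atTop (𝓝 (L / L)) := htend.div_const L
    rw [div_self hLpos.ne'] at h1
    have h2 : Tendsto (fun n => ((x n / L : ℝ) : ℂ)) atTop (𝓝 ((1:ℝ):ℂ)) :=
      (Complex.continuous_ofReal.tendsto _).comp h1
    simpa [hw, Complex.ofReal_div] using h2.mul_const z0
  have hfw : Tendsto (fun n => c * ‖f (w n)‖) atTop
      (𝓝 (c * ‖f z0‖)) :=
    (((continuous_norm.comp hd.continuous).tendsto z0).comp hwt).const_mul c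
  have hgt : L < c * ‖f z0‖ := by rw [hz0f]; exact h L haL
  obtain ⟨n, hn⟩ := (hfw.eventually (eventually_gt_nhds hgt)).exists
  have : x (n + 1) ≤ L := hxL (n + 1)
  have hstep : c * ‖f (w n)‖ ≤ x (n + 1) := by
    have : ‖f (w n)‖ ≤ maxMod f (x n) := le_maxMod hd (hwabs n)
    calc c * ‖f (w n)‖ ≤ c * maxMod f (x n) := by nlinarith
    _ = x (n+1) := by rw [hxdef]; simp [Function.iterate_succ_apply', hgdef]
  linarith


section series
variable (hd : Differentiable ℂ f)

/-- Cauchy's inequality for the entire power-series coefficients. -/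
lemma cauchy_bound (hd : Differentiable ℂ f) {r : ℝ} (hr : 0 < r) (n : ℕ) :
    ‖cauchyPowerSeries f 0 1 n‖ * r ^ n ≤ maxMod f r := by
  set p := cauchyPowerSeries f 0 1 with hpdef
  have hp : HasFPowerSeriesOnBall f p 0 ⊤ := by
    simpa [hpdef] using hd.hasFPowerSeriesOnBall 0 (R := 1) one_pos
  have hq0 : HasFPowerSeriesOnBall f (cauchyPowerSeries f 0 r.toNNReal) 0 ⊤ :=
    hd.hasFPowerSeriesOnBall 0 (R := r.toNNReal) (by simpa using hr)
  have hco : (r.toNNReal : ℝ) = r := Real.coe_toNNReal r hr.le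
  rw [hco] at hq0
  have hpq : p = cauchyPowerSeries f 0 r :=
    hp.hasFPowerSeriesAt.eq_formalMultilinearSeries hq0.hasFPowerSeriesAt
  have hIb : (∫ θ : ℝ in (0)..2 * Real.pi, ‖f (circleMap 0 r θ)‖)
      ≤ 2 * Real.pi * maxMod f r := by
    have hle : ∀ θ ∈ Set.uIcc (0:ℝ) (2 * Real.pi), ‖f (circleMap 0 r θ)‖ ≤ maxMod f r := by
      intro θ _
      have : ‖circleMap 0 r θ‖ = r := by
        rw [norm_circleMap_zero]; exact _root_.abs_of_pos hr
      simpa using le_maxMod hd this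
    calc (∫ θ : ℝ in (0)..2 * Real.pi, ‖f (circleMap 0 r θ)‖)
        ≤ ∫ _θ : ℝ in (0)..2 * Real.pi, maxMod f r := by
          apply intervalIntegral.integral_mono_on Real.two_pi_pos.le
          · exact ((hd.continuous.comp (continuous_circleMap 0 r)).norm).intervalIntegrable _ _
          · exact intervalIntegrable_const
          · intro θ hθ
            exact hle θ (Set.mem_uIcc_of_le hθ.1 hθ.2)
      _ = 2 * Real.pi * maxMod f r := by simp [mul_comm]
  have hb := norm_cauchyPowerSeries_le f 0 r n
  rw [← hpq] at hb
  have h2 : ‖p n‖ * r ^ n ≤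
      (((2 * Real.pi)⁻¹ * ∫ θ : ℝ in (0)..2 * Real.pi, ‖f (circleMap 0 r θ)‖) * |r|⁻¹ ^ n)
        * r ^ n :=
    mul_le_mul_of_nonneg_right hb (pow_nonneg hr.le n)
  refine h2.trans ?_
  rw [_root_.abs_of_pos hr]
  have hrn : (r⁻¹) ^ n * r ^ n = 1 := by
    rw [← mul_pow, inv_mul_cancel₀ hr.ne', one_pow]
  calc ((2 * Real.pi)⁻¹ * ∫ θ : ℝ in (0)..2 * Real.pi, ‖f (circleMap 0 r θ)‖) * r⁻¹ ^ n * r ^ n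
      = ((2 * Real.pi)⁻¹ * ∫ θ : ℝ in (0)..2 * Real.pi, ‖f (circleMap 0 r θ)‖) := by
        rw [mul_assoc, hrn, mul_one]
    _ ≤ (2 * Real.pi)⁻¹ * (2 * Real.pi * maxMod f r) := by
        apply mul_le_mul_of_nonneg_left hIb (by positivity)
    _ = maxMod f r := by
        rw [← mul_assoc, inv_mul_cancel₀ Real.two_pi_pos.ne', one_mul]

lemma summ (hd : Differentiable ℂ f) {s : ℝ} (hs : 0 ≤ s) :
    Summable (fun n => ‖cauchyPowerSeries f 0 1 n‖ * s ^ n) := by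
  set p := cauchyPowerSeries f 0 1 with hpdef
  have hp : HasFPowerSeriesOnBall f p 0 ⊤ := by
    simpa [hpdef] using hd.hasFPowerSeriesOnBall 0 (R := 1) one_pos
  have hrad : p.radius = ⊤ := top_le_iff.mp hp.r_le
  have := p.summable_norm_mul_pow (r := s.toNNReal) (by rw [hrad]; exact ENNReal.coe_lt_top)
  simpa [Real.coe_toNNReal s hs] using this

lemma repr_hasSum (hd : Differentiable ℂ f) (z : ℂ) :
    HasSum (fun n => (cauchyPowerSeries f 0 1 n) fun _ => z) (f z) := by
  have hp : HasFPowerSeriesOnBall f (cauchyPowerSeries f 0 1) 0 ⊤ := by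
    simpa using hd.hasFPowerSeriesOnBall 0 (R := 1) one_pos
  simpa using hp.hasSum (y := z) (by simp [edist_lt_top])

lemma fbound (hd : Differentiable ℂ f) (z : ℂ) :
    ‖f z‖ ≤ ∑' n, ‖cauchyPowerSeries f 0 1 n‖ * (‖z‖) ^ n := by
  set p := cauchyPowerSeries f 0 1 with hpdef
  have h1 : ∀ n, ‖(p n) fun _ => z‖ ≤ ‖p n‖ * ‖z‖ ^ n := by
    intro n
    have := (p n).le_opNorm (fun _ => z)
    simpa using this
  have hs : Summable (fun n => ‖(p n) fun _ => z‖) :=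
    Summable.of_nonneg_of_le (fun _ => norm_nonneg _) h1 (summ hd (norm_nonneg z))
  calc ‖f z‖ = ‖f z‖ := rfl
    _ = ‖∑' n, (p n) fun _ => z‖ := by rw [(repr_hasSum hd z).tsum_eq]
    _ ≤ ∑' n, ‖(p n) fun _ => z‖ := norm_tsum_le_tsum_norm hs
    _ ≤ ∑' n, ‖p n‖ * ‖z‖ ^ n :=
        Summable.tsum_le_tsum h1 hs (summ hd (norm_nonneg z))

lemma trans_coeff (hf : TranscendentalEntire f) (N : ℕ) :
    ∃ m, N ≤ m ∧ ‖cauchyPowerSeries f 0 1 m‖ ≠ 0 := by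
  by_contra hcon
  push_neg at hcon
  set p := cauchyPowerSeries f 0 1 with hpdef
  apply hf.2
  refine ⟨∑ k ∈ Finset.range N, Polynomial.C (p.coeff k) * Polynomial.X ^ k, fun z => ?_⟩
  have hz : ∀ n ∉ Finset.range N, ((p n) fun _ => z) = 0 := by
    intro n hn
    have : p n = 0 := norm_eq_zero.mp (hcon n (by simpa using hn))
    simp [this]
  have := (repr_hasSum hf.1 z).tsum_eq
  rw [← this, tsum_eq_sum hz]
  rw [Polynomial.eval_finset_sum]
  refine Finset.sum_congr rfl fun k _ => ?_
  rw [FormalMultilinearSeries.apply_eq_pow_smul_coeff]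
  simp only [Polynomial.eval_mul, Polynomial.eval_C, Polynomial.eval_pow, Polynomial.eval_X,
    smul_eq_mul]
  ring

/-- The key inequality: `M(εr) ≤ ε² M(r)` for all large `r`. -/
lemma keyIneq (hf : TranscendentalEntire f) {ε : ℝ} (hε : ε ∈ Set.Ioo (0:ℝ) 1) :
    ∃ U ≥ 1, ∀ r ≥ U, maxMod f (ε * r) ≤ ε ^ 2 * maxMod f r := by
  have hd := hf.1
  set p := cauchyPowerSeries f 0 1 with hpdef
  obtain ⟨ε0, ε1⟩ := hε
  obtain ⟨N0, hN0⟩ := exists_pow_lt_of_lt_one (show (0:ℝ) < ε^2 * (1-ε)/2 by have := mul_pos (pow_pos ε0 2) (sub_pos.mpr ε1); linarith) ε1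
  set N := max N0 1 with hNdef
  have hN : ε ^ N ≤ ε ^ 2 * (1 - ε) / 2 :=
    le_of_lt (lt_of_le_of_lt (pow_le_pow_of_le_one ε0.le ε1.le (le_max_left _ _)) hN0)
  have hN1 : 1 ≤ N := le_max_right _ _
  obtain ⟨m, hmN, hm⟩ := trans_coeff hf N
  set c := ‖p m‖ with hcdef
  have hc : 0 < c := lt_of_le_of_ne (norm_nonneg _) (Ne.symm hm)
  set C := ∑ k ∈ Finset.range N, ‖p k‖ with hCdef
  have hC : 0 ≤ C := Finset.sum_nonneg fun _ _ => norm_nonneg _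
  refine ⟨max 1 (2 * C / (ε ^ 2 * c)), le_max_left _ _, fun r hr => ?_⟩
  have hr1 : (1:ℝ) ≤ r := le_trans (le_max_left _ _) hr
  have hr0 : 0 < r := lt_of_lt_of_le one_pos hr1
  have hrC : 2 * C / (ε ^ 2 * c) ≤ r := le_trans (le_max_right _ _) hr
  have hεr : 0 < ε * r := by positivity
  set M := maxMod f r with hMdef
  have hM0 : 0 ≤ M := maxMod_nonneg hd hr0.le
  -- M(εr) ≤ total sum
  obtain ⟨z0, hz0, hz0f⟩ := exists_maxMod hd hεr.le
  have h1 : maxMod f (ε * r) ≤ ∑' n, ‖p n‖ * (ε * r) ^ n := by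
    rw [← hz0f]
    simpa [hz0] using fbound hd z0
  have hsum := summ hd hεr.le
  have hsplit := Summable.sum_add_tsum_nat_add (f := fun n => ‖p n‖ * (ε * r) ^ n) N hsum
  -- tail bound
  have htail : (∑' k, ‖p (k + N)‖ * (ε * r) ^ (k + N)) ≤ ε ^ 2 / 2 * M := by
    have hterm : ∀ k, ‖p (k + N)‖ * (ε * r) ^ (k + N) ≤ ε ^ (k + N) * M := by
      intro k
      have := cauchy_bound hd hr0 (k + N)
      calc ‖p (k + N)‖ * (ε * r) ^ (k + N)
          = (‖p (k + N)‖ * r ^ (k + N)) * ε ^ (k + N) := by rw [mul_pow]; ring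
        _ ≤ M * ε ^ (k + N) := by
            apply mul_le_mul_of_nonneg_right this (by positivity)
        _ = ε ^ (k + N) * M := by ring
    have hsl : Summable (fun k => ‖p (k + N)‖ * (ε * r) ^ (k + N)) :=
      (summable_nat_add_iff (f := fun n => ‖p n‖ * (ε * r) ^ n) N).mpr hsum
    have hsr : Summable (fun k : ℕ => ε ^ (k + N) * M) := by
      have : Summable (fun k : ℕ => ε ^ k) := summable_geometric_of_lt_one ε0.le ε1
      simpa [pow_add, mul_assoc] using this.mul_right (ε ^ N * M)
    calc (∑' k, ‖p (k + N)‖ * (ε * r) ^ (k + N)) ≤ ∑' k : ℕ, ε ^ (k + N) * M :=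
          Summable.tsum_le_tsum hterm hsl hsr
      _ = (∑' k : ℕ, ε ^ k) * (ε ^ N * M) := by
          rw [← tsum_mul_right]; congr 1; ext k; rw [pow_add]; ring
      _ = (1 - ε)⁻¹ * (ε ^ N * M) := by rw [tsum_geometric_of_lt_one ε0.le ε1]
      _ ≤ (1 - ε)⁻¹ * ((ε ^ 2 * (1 - ε) / 2) * M) := by
          apply mul_le_mul_of_nonneg_left _ (inv_nonneg.mpr (by linarith))
          exact mul_le_mul_of_nonneg_right hN hM0
      _ = ε ^ 2 / 2 * M := by
          rw [show (ε ^ 2 * (1 - ε) / 2) * M = (1 - ε) * (ε ^ 2 / 2 * M) by ring,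
            ← mul_assoc, inv_mul_cancel₀ (by linarith : (1:ℝ) - ε ≠ 0), one_mul]
  -- head bound
  have hhead : (∑ k ∈ Finset.range N, ‖p k‖ * (ε * r) ^ k) ≤ ε ^ 2 / 2 * M := by
    have hcm : c * r ^ m ≤ M := cauchy_bound hd hr0 m
    have h2 : (∑ k ∈ Finset.range N, ‖p k‖ * (ε * r) ^ k) ≤ C * r ^ (m - 1) := by
      rw [hCdef, Finset.sum_mul]
      apply Finset.sum_le_sum
      intro k hk
      have hk1 : k ≤ m - 1 := by
        have := Finset.mem_range.mp hk; omega
      have : (ε * r) ^ k ≤ r ^ (m - 1) := by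
        calc (ε * r) ^ k ≤ r ^ k := by
              apply pow_le_pow_left₀ (by positivity)
              nlinarith
          _ ≤ r ^ (m - 1) := pow_le_pow_right₀ hr1 hk1
      exact mul_le_mul_of_nonneg_left this (norm_nonneg _)
    have hm1 : m - 1 + 1 = m := by omega
    have h3 : C * r ^ (m - 1) ≤ ε ^ 2 / 2 * (c * r ^ m) := by
      have : C * r ^ (m - 1) ≤ (ε ^ 2 * c * r / 2) * r ^ (m - 1) := by
        apply mul_le_mul_of_nonneg_right _ (by positivity)
        rw [div_le_iff₀ (by positivity)] at hrC
        nlinarith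
      refine this.trans (le_of_eq ?_)
      have hrm : r ^ m = r ^ (m - 1) * r := by rw [← pow_succ, hm1]
      rw [hrm]; ring
    refine h2.trans (h3.trans ?_)
    apply mul_le_mul_of_nonneg_left hcm (by positivity)
  calc maxMod f (ε * r) ≤ ∑' n, ‖p n‖ * (ε * r) ^ n := h1
    _ = (∑ k ∈ Finset.range N, ‖p k‖ * (ε * r) ^ k)
        + ∑' k, ‖p (k + N)‖ * (ε * r) ^ (k + N) := hsplit.symm
    _ ≤ ε ^ 2 / 2 * M + ε ^ 2 / 2 * M := add_le_add hhead htail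
    _ = ε ^ 2 * M := by ring

end series
end AfastAux

open AfastAux in
theorem Afast_eq_mu_description (f : ℂ → ℂ) (hf : TranscendentalEntire f)
    (ε : ℝ) (hε : ε ∈ Set.Ioo (0 : ℝ) 1)
    (R : ℝ) (hR : 0 < R) (hμ : ∀ r ≥ R, ε * maxMod f r > r)
    (R' : ℝ) (hR' : 0 < R') (hM : ∀ r ≥ R', maxMod f r > r) :
    Afast f R' = {z : ℂ | ∃ L : ℕ, ∀ n : ℕ,
      ‖f^[n + L] z‖ ≥ (fun r => ε * maxMod f r)^[n] R} := by
  have hd : Differentiable ℂ f := hf.1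
  obtain ⟨ε0, ε1⟩ := hε
  set μ : ℝ → ℝ := fun r => ε * maxMod f r with hμdef
  have hμge : ∀ r ≥ R, r ≤ μ r := fun r hr => (hμ r hr).le
  have hMge : ∀ r ≥ R', r ≤ maxMod f r := fun r hr => (hM r hr).le
  have hμiter : ∀ n, R ≤ μ^[n] R := iter_ge hμge
  have hMiter : ∀ n, R' ≤ (maxMod f)^[n] R' := iter_ge hMge
  have hμmono : Monotone (fun n => μ^[n] R) := iter_mono hμge
  -- escape for the M-chain
  have hone : (fun r => 1 * maxMod f r) = maxMod f := by funext r; rw [one_mul]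
  obtain ⟨k₁, hk₁⟩ := escape hd one_pos hR'
    (fun r hr => by rw [one_mul]; exact hM r hr) R
  rw [hone] at hk₁
  -- key inequality and escape for the μ-chain
  obtain ⟨U, hU1, hkey⟩ := keyIneq hf ⟨ε0, ε1⟩
  obtain ⟨k₂, hk₂⟩ := escape hd ε0 hR (fun r hr => hμ r hr) (max (R'/ε) U)
  rw [← hμdef] at hk₂
  -- forward comparison: μ^[n] R ≤ M^[n+k₁] R'
  have key₁ : ∀ n, μ^[n] R ≤ (maxMod f)^[n + k₁] R' := by
    intro n
    induction n with
    | zero => simpa using hk₁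
    | succ n ih =>
      have h1 : μ^[n+1] R = ε * maxMod f (μ^[n] R) := by
        rw [Function.iterate_succ_apply']
      have h2 : (maxMod f)^[n+1+k₁] R' = maxMod f ((maxMod f)^[n+k₁] R') := by
        rw [show n+1+k₁ = (n+k₁)+1 by omega, Function.iterate_succ_apply']
      rw [h1, h2]
      have h0x : (0:ℝ) ≤ μ^[n] R := hR.le.trans (hμiter n)
      have hmm : maxMod f (μ^[n] R) ≤ maxMod f ((maxMod f)^[n+k₁] R') :=
        maxMod_mono hd h0x ih
      have hnn : 0 ≤ maxMod f (μ^[n] R) := maxMod_nonneg hd h0x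
      nlinarith
  -- reverse comparison: M^[n] R' ≤ ε * μ^[n+k₂] R
  have key₂ : ∀ n, (maxMod f)^[n] R' ≤ ε * μ^[n + k₂] R := by
    intro n
    induction n with
    | zero =>
      have h1 : R'/ε ≤ μ^[k₂] R := le_trans (le_max_left _ _) hk₂
      have : R' = ε * (R'/ε) := by field_simp
      calc (maxMod f)^[0] R' = R' := rfl
        _ = ε * (R'/ε) := this
        _ ≤ ε * μ^[0 + k₂] R := by
            rw [zero_add]; exact mul_le_mul_of_nonneg_left h1 ε0.le
    | succ n ih =>
      have h1 : (maxMod f)^[n+1] R' = maxMod f ((maxMod f)^[n] R') := by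
        rw [Function.iterate_succ_apply']
      have h2 : μ^[n+1+k₂] R = ε * maxMod f (μ^[n+k₂] R) := by
        rw [show n+1+k₂ = (n+k₂)+1 by omega, Function.iterate_succ_apply']
      have hXU : U ≤ μ^[n+k₂] R :=
        le_trans (le_trans (le_max_right _ _) hk₂) (hμmono (Nat.le_add_left k₂ n))
      have h0 : (0:ℝ) ≤ (maxMod f)^[n] R' := hR'.le.trans (hMiter n)
      calc (maxMod f)^[n+1] R' = maxMod f ((maxMod f)^[n] R') := h1
        _ ≤ maxMod f (ε * μ^[n+k₂] R) := maxMod_mono hd h0 ih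
        _ ≤ ε ^ 2 * maxMod f (μ^[n+k₂] R) := hkey _ hXU
        _ = ε * (ε * maxMod f (μ^[n+k₂] R)) := by ring
        _ = ε * μ^[n+1+k₂] R := by rw [h2]
  -- conclude
  ext z
  simp only [Afast, ALevel, mem_iUnion, mem_setOf_eq]
  constructor
  · rintro ⟨L, hz⟩
    refine ⟨k₁ + L, fun n => ?_⟩
    have h1 := hz (n + k₁ + L) (by push_cast; omega)
    have ht : (((n + k₁ + L : ℕ) : ℤ) + -(L:ℤ)).toNat = n + k₁ := by omega
    rw [ht] at h1
    rw [show n + (k₁ + L) = n + k₁ + L from by omega]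
    exact le_trans (key₁ n) h1
  · rintro ⟨L, hz⟩
    refine ⟨L + k₂, fun n hn => ?_⟩
    have hn' : L + k₂ ≤ n := by omega
    have hnm : n = (n - (L + k₂) + k₂) + L := by omega
    have ht : ((n:ℤ) + -((L + k₂ : ℕ):ℤ)).toNat = n - (L + k₂) := by omega
    rw [ht]
    set m := n - (L + k₂) with hm
    have h1 := hz (m + k₂)
    have h0 : (0:ℝ) < μ^[m+k₂] R := hR.trans_le (hμiter (m+k₂))
    have h2 : (maxMod f)^[m] R' ≤ μ^[m+k₂] R := by nlinarith [key₂ m]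
    rw [show f^[n] z = f^[(m + k₂) + L] z from by rw [← hnm]]
    exact le_trans h2 h1
end

section
/- Let f be a transcendental entire function, R > 0 with M(r) > r for r ≥ R, and L ∈ ℤ. Then every connected component of A_R^L(f) is unbounded. (Sketch of proof by contradiction: if K is a bounded component, take a Jordan curve γ in the complement of the closed set A_R^L(f) surrounding K; the sets γ_n = {z ∈ γ : |f^n(z)| ≥ M^{n+L}(R)} are nonempty by the maximum principle, closed, and nested, so their intersection is a point of A_R^L(f) on γ, a contradiction.) -/
open Complex Filter Set Function

section Aux

open Metric Bornology

lemma sphereSet_eq (r : ℝ) : {z : ℂ | ‖z‖ = r} = Metric.sphere (0:ℂ) r := by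
  ext z; simp [mem_sphere_zero_iff_norm]

lemma bddAbove_maxMod {f : ℂ → ℂ} (hd : Differentiable ℂ f) (r : ℝ) :
    BddAbove ((fun z => ‖f z‖) '' {z : ℂ | ‖z‖ = r}) := by
  rw [sphereSet_eq]
  exact (isCompact_sphere (0:ℂ) r).bddAbove_image
    ((continuous_norm.comp hd.continuous).continuousOn)

lemma abs_le_maxMod_self {f : ℂ → ℂ} (hd : Differentiable ℂ f) (u : ℂ) :
    ‖f u‖ ≤ maxMod f (‖u‖) :=
  le_csSup (bddAbove_maxMod hd _) ⟨u, rfl, rfl⟩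

lemma abs_le_maxMod {f : ℂ → ℂ} (hd : Differentiable ℂ f) {u : ℂ} {s : ℝ}
    (h : ‖u‖ ≤ s) : ‖f u‖ ≤ maxMod f s := by
  rcases h.eq_or_lt with he | hl
  · rw [← he]; exact abs_le_maxMod_self hd u
  · have hs : 0 < s := (norm_nonneg u).trans_lt hl
    have key : ‖f u‖ ≤ maxMod f s := by
      refine Complex.norm_le_of_forall_mem_frontier_norm_le (U := Metric.ball (0:ℂ) s)
        isBounded_ball hd.diffContOnCl (fun w hw => ?_) ?_
      · rw [frontier_ball (0:ℂ) hs.ne'] at hw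
        have hwabs : ‖w‖ = s := by
          exact mem_sphere_zero_iff_norm.mp hw
        rw [← hwabs]
        exact abs_le_maxMod_self hd w
      · rw [closure_ball (0:ℂ) hs.ne', mem_closedBall_zero_iff]
        exact h
    exact key

lemma maxMod_lt {f : ℂ → ℂ} (hd : Differentiable ℂ f)
    (hnc : ¬ ∃ c : ℂ, ∀ z, f z = c) {t s : ℝ} (ht : 0 ≤ t) (hts : t < s) :
    maxMod f t < maxMod f s := by
  have hne : (Metric.sphere (0:ℂ) t).Nonempty :=
    ⟨(t:ℂ), by simp [mem_sphere_zero_iff_norm, Complex.norm_real, _root_.abs_of_nonneg ht]⟩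
  obtain ⟨u, hu, hmax⟩ := (isCompact_sphere (0:ℂ) t).exists_isMaxOn hne
    ((continuous_norm.comp hd.continuous).continuousOn)
  have hut : ‖u‖ = t := by
    exact mem_sphere_zero_iff_norm.mp hu
  have hmm : maxMod f t = ‖f u‖ := by
    refine le_antisymm (csSup_le ?_ ?_) ?_
    · exact ⟨‖f u‖, ⟨u, hut, rfl⟩⟩
    · rintro y ⟨w, hw, rfl⟩
      have : w ∈ Metric.sphere (0:ℂ) t := by rw [← sphereSet_eq]; exact hw
      exact hmax this
    · exact le_csSup (bddAbove_maxMod hd t) ⟨u, hut, rfl⟩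
  have hle : maxMod f t ≤ maxMod f s := by
    rw [hmm]; exact abs_le_maxMod hd (by rw [hut]; exact hts.le)
  rcases hle.lt_or_eq with h | h
  · exact h
  · exfalso
    have humem : u ∈ Metric.ball (0:ℂ) s := by
      rw [mem_ball_zero_iff, hut]; exact hts
    have hmax' : IsMaxOn (norm ∘ f) (Metric.ball (0:ℂ) s) u := by
      intro v hv
      have : ‖f v‖ ≤ maxMod f s :=
        abs_le_maxMod hd (le_of_lt (mem_ball_zero_iff.mp hv))
      simp only [comp_apply, mem_setOf_eq]
      rw [← h, hmm] at this; exact this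
    have heq := Complex.eqOn_of_isPreconnected_of_isMaxOn_norm
      (convex_ball (0:ℂ) s).isPreconnected isOpen_ball hd.differentiableOn humem hmax'
    have hev : f =ᶠ[nhds u] (fun _ => f u) :=
      eventually_of_mem (isOpen_ball.mem_nhds humem) (fun x hx => heq hx)
    have : f = fun _ => f u :=
      AnalyticOnNhd.eq_of_eventuallyEq
        (analyticOnNhd_univ_iff_differentiable.mpr hd)
        (analyticOnNhd_univ_iff_differentiable.mpr (differentiable_const _)) hev
    exact hnc ⟨f u, fun z => by rw [this]⟩

lemma exists_compact_open_in_closed {F : Set ℂ} (hF : IsClosed F) {z : ℂ} (hz : z ∈ F)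
    (hbdd : Bornology.IsBounded (connectedComponentIn F z)) :
    ∃ C W : Set ℂ, IsCompact C ∧ z ∈ C ∧ IsOpen W ∧ C = W ∩ F := by
  set K := connectedComponentIn F z with hKdef
  obtain ⟨ρ', hρ'⟩ := hbdd.subset_closedBall 0
  set ρ : ℝ := ρ' + 1 with hρdef
  have hKball : K ⊆ ball (0:ℂ) ρ :=
    hρ'.trans (closedBall_subset_ball (lt_add_one ρ'))
  set B := closedBall (0:ℂ) ρ with hBdef
  have hXcomp : IsCompact (F ∩ B) := (isCompact_closedBall (0:ℂ) ρ).inter_left hF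
  have hzK : z ∈ K := mem_connectedComponentIn hz
  have hzFB : z ∈ F ∩ B := ⟨hz, ball_subset_closedBall (hKball hzK)⟩
  haveI : CompactSpace ↥(F ∩ B) := isCompact_iff_compactSpace.mp hXcomp
  set x₀ : ↥(F ∩ B) := ⟨z, hzFB⟩ with hx₀def
  have himg : (Subtype.val '' connectedComponent x₀ : Set ℂ) ⊆ ball (0:ℂ) ρ := by
    rw [← connectedComponentIn_eq_image hzFB]
    exact (connectedComponentIn_mono z (inter_subset_left : F ∩ B ⊆ F)).trans hKball
  set T : Set ↥(F ∩ B) := Subtype.val ⁻¹' (sphere (0:ℂ) ρ) with hTdef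
  have hTclosed : IsClosed T := isClosed_sphere.preimage continuous_subtype_val
  have hdisj : T ∩ ⋂ s : {s : Set ↥(F ∩ B) // IsClopen s ∧ x₀ ∈ s}, (s : Set ↥(F ∩ B)) = ∅ := by
    rw [← connectedComponent_eq_iInter_isClopen x₀]
    ext w
    simp only [mem_inter_iff, mem_empty_iff_false, iff_false, not_and]
    intro hw1 hw2
    have h1 : ‖(w : ℂ)‖ < ρ := mem_ball_zero_iff.mp (himg ⟨w, hw2, rfl⟩)
    have h2 : ‖(w : ℂ)‖ = ρ := mem_sphere_zero_iff_norm.mp hw1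
    linarith
  obtain ⟨u, hu⟩ := hTclosed.isCompact.elim_finite_subfamily_closed _
    (fun s => s.2.1.1) hdisj
  set Ct : Set ↥(F ∩ B) := ⋂ s ∈ u, (s : Set ↥(F ∩ B)) with hCtdef
  have hCtClopen : IsClopen Ct := isClopen_biInter_finset (fun s _ => s.2.1)
  have hx₀Ct : x₀ ∈ Ct := mem_iInter₂.mpr fun s _ => s.2.2
  have hCtT : ∀ x ∈ Ct, x ∉ T := by
    intro x hx hxT
    have : x ∈ T ∩ ⋂ s ∈ u, (s : Set ↥(F ∩ B)) := ⟨hxT, hx⟩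
    rw [hu] at this
    exact this
  set C : Set ℂ := Subtype.val '' Ct with hCdef
  have hCcomp : IsCompact C := (hCtClopen.1.isCompact).image continuous_subtype_val
  have hzC : z ∈ C := ⟨x₀, hx₀Ct, rfl⟩
  have hCball : C ⊆ ball (0:ℂ) ρ := by
    rintro w ⟨x, hx, rfl⟩
    have hle : ‖(x : ℂ)‖ ≤ ρ := mem_closedBall_zero_iff.mp x.2.2
    rcases hle.lt_or_eq with h | h
    · exact mem_ball_zero_iff.mpr h
    · exact absurd (mem_sphere_zero_iff_norm.mpr h) (hCtT x hx)
  obtain ⟨V, hVopen, hVeq⟩ := isOpen_induced_iff.mp hCtClopen.2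
  refine ⟨C, V ∩ ball (0:ℂ) ρ, hCcomp, hzC, hVopen.inter isOpen_ball, ?_⟩
  ext w
  constructor
  · rintro ⟨x, hx, rfl⟩
    refine ⟨⟨?_, hCball ⟨x, hx, rfl⟩⟩, x.2.1⟩
    have : x ∈ Subtype.val ⁻¹' V := hVeq ▸ hx
    exact this
  · rintro ⟨⟨hwV, hwball⟩, hwF⟩
    have hwFB : w ∈ F ∩ B := ⟨hwF, ball_subset_closedBall hwball⟩
    refine ⟨⟨w, hwFB⟩, ?_, rfl⟩
    rw [← hVeq]
    exact hwV

end Aux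

theorem ALevel_components_unbounded (f : ℂ → ℂ) (hf : TranscendentalEntire f)
    (R : ℝ) (hR : 0 < R) (hM : ∀ r ≥ R, maxMod f r > r) (L : ℤ) :
    ∀ z ∈ ALevel f R L,
      ¬ Bornology.IsBounded (connectedComponentIn (ALevel f R L) z) := by
  classical
  intro z hz hbdd
  obtain ⟨hd, hpoly⟩ := hf
  have hnc : ¬ ∃ c : ℂ, ∀ w, f w = c := by
    rintro ⟨c, hc⟩
    exact hpoly ⟨Polynomial.C c, fun w => by simp [hc]⟩
  set F := ALevel f R L with hFdef
  have hg : ∀ n : ℕ, Continuous fun w => ‖f^[n] w‖ :=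
    fun n => continuous_norm.comp (hd.iterate n).continuous
  set c : ℕ → ℝ := fun n => (maxMod f)^[((n:ℤ)+L).toNat] R with hcdef
  have hFclosed : IsClosed F := by
    have hFe : F = ⋂ n : ℕ, {w : ℂ | 0 ≤ (n:ℤ) + L → c n ≤ ‖f^[n] w‖} := by
      ext w
      simp only [hFdef, ALevel, mem_setOf_eq, mem_iInter, ge_iff_le, hcdef]
    rw [hFe]
    refine isClosed_iInter fun n => ?_
    by_cases hn : 0 ≤ (n:ℤ) + L
    · simp only [hn, forall_true_left]
      exact isClosed_le continuous_const (hg n)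
    · simp only [hn, IsEmpty.forall_iff, false_implies, setOf_true]
      exact isClosed_univ
  obtain ⟨C, W, hCcomp, hzC, hWopen, hCW⟩ := exists_compact_open_in_closed hFclosed hz hbdd
  have hCF : C ⊆ F := hCW ▸ inter_subset_right
  have hFCclosed : IsClosed (F \ C) := by
    have : F \ C = F ∩ Wᶜ := by
      rw [hCW]; ext w
      simp only [mem_diff, mem_inter_iff, mem_compl_iff]
      tauto
    rw [this]
    exact hFclosed.inter (hWopen.isClosed_compl)
  have hsub : C ⊆ (F \ C)ᶜ := fun w hw hw2 => hw2.2 hw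
  obtain ⟨δ, hδpos, hδ⟩ := hCcomp.exists_thickening_subset_open hFCclosed.isOpen_compl hsub
  set UU := Metric.thickening (δ/2) C with hUUdef
  have hUUopen : IsOpen UU := Metric.isOpen_thickening
  have hUUbdd : Bornology.IsBounded UU := hCcomp.isBounded.thickening
  have hzUU : z ∈ UU := Metric.self_subset_thickening (by linarith) C hzC
  have hCne : C.Nonempty := ⟨z, hzC⟩
  have hfrF : ∀ w ∈ frontier UU, w ∉ F := by
    intro w hw hwF
    have hwd' : Metric.infEDist w C = ENNReal.ofReal (δ/2) :=
      Metric.frontier_thickening_subset C hw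
    have hwd : Metric.infDist w C = δ/2 := by
      rw [Metric.infDist, hwd', ENNReal.toReal_ofReal (by linarith : (0:ℝ) ≤ δ/2)]
    have hwC : w ∉ C := by
      intro h
      rw [Metric.infDist_zero_of_mem h] at hwd
      linarith
    have : w ∈ Metric.thickening δ C :=
      (Metric.mem_thickening_iff_infDist_lt hCne).mpr (by rw [hwd]; linarith)
    exact (hδ this) ⟨hwF, hwC⟩
  have hUUne : UU.Nonempty := ⟨z, hzUU⟩
  have hfrne : (frontier UU).Nonempty := by
    rw [nonempty_iff_ne_empty]
    intro h
    rcases frontier_eq_empty_iff.mp h with h1 | h1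
    · exact hUUne.ne_empty h1
    · rw [h1] at hUUbdd
      obtain ⟨r, hr⟩ := hUUbdd.subset_closedBall 0
      have h2 : ((|r|+1 : ℝ) : ℂ) ∈ Metric.closedBall (0:ℂ) r := hr (mem_univ _)
      rw [Metric.mem_closedBall, dist_zero_right, Complex.norm_real, Real.norm_eq_abs,
        _root_.abs_of_nonneg (by positivity : (0:ℝ) ≤ |r| + 1)] at h2
      have := le_abs_self r
      linarith
  have hfrbdd : Bornology.IsBounded (frontier UU) :=
    hUUbdd.closure.subset frontier_subset_closure
  have hfrcomp : IsCompact (frontier UU) :=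
    Metric.isCompact_of_isClosed_isBounded isClosed_frontier hfrbdd
  set n₀ : ℕ := (-L).toNat with hn₀def
  have hstep : ∀ (m : ℕ) (w : ℂ), 0 ≤ (m:ℤ) + L →
      c (m+1) ≤ ‖f^[m+1] w‖ → c m ≤ ‖f^[m] w‖ := by
    intro m w hm h1
    by_contra h2
    push_neg at h2
    have hc1 : c (m+1) = maxMod f (c m) := by
      simp only [hcdef]
      rw [show (((m+1:ℕ):ℤ)+L).toNat = ((m:ℤ)+L).toNat + 1 by omega]
      rw [Function.iterate_succ_apply']
    have h3 : ‖f^[m+1] w‖ = ‖f (f^[m] w)‖ := by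
      rw [Function.iterate_succ_apply']
    have h4 : ‖f (f^[m] w)‖ ≤ maxMod f (‖f^[m] w‖) :=
      abs_le_maxMod_self hd _
    have h5 : maxMod f (‖f^[m] w‖) < maxMod f (c m) :=
      maxMod_lt hd hnc (norm_nonneg _) h2
    rw [hc1, h3] at h1
    linarith
  set Γ : ℕ → Set ℂ :=
    fun k => frontier UU ∩ {w : ℂ | c (k + n₀) ≤ ‖f^[k + n₀] w‖} with hΓdef
  have hΓclosed : ∀ k, IsClosed (Γ k) := fun k =>
    isClosed_frontier.inter (isClosed_le continuous_const (hg _))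
  have hΓanti : ∀ k, Γ (k+1) ⊆ Γ k := by
    intro k w hw
    obtain ⟨hw1, hw2⟩ := hw
    refine ⟨hw1, ?_⟩
    have hsign : 0 ≤ ((k + n₀ : ℕ):ℤ) + L := by omega
    have he : k + 1 + n₀ = (k + n₀) + 1 := by omega
    rw [he] at hw2
    exact hstep (k + n₀) w hsign hw2
  have hΓne : ∀ k, (Γ k).Nonempty := by
    intro k
    obtain ⟨w, hwfr, hwmax⟩ := hfrcomp.exists_isMaxOn hfrne (hg (k + n₀)).continuousOn
    refine ⟨w, hwfr, ?_⟩
    have hsign : 0 ≤ ((k + n₀ : ℕ):ℤ) + L := by omega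
    have hzF : c (k + n₀) ≤ ‖f^[k + n₀] z‖ := hz (k + n₀) hsign
    have hmp : ‖f^[k + n₀] z‖ ≤ ‖f^[k + n₀] w‖ := by
      refine Complex.norm_le_of_forall_mem_frontier_norm_le hUUbdd
        (hd.iterate (k + n₀)).diffContOnCl (fun y hy => ?_) (subset_closure hzUU)
      have := hwmax hy
      simpa using this
    exact le_trans hzF hmp
  obtain ⟨w, hw⟩ := IsCompact.nonempty_iInter_of_sequence_nonempty_isCompact_isClosed Γ
    hΓanti hΓne
    (Metric.isCompact_of_isClosed_isBounded (hΓclosed 0)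
      (hfrbdd.subset inter_subset_left)) hΓclosed
  rw [mem_iInter] at hw
  have hwfr : w ∈ frontier UU := (hw 0).1
  refine hfrF w hwfr ?_
  intro n hn
  have hn₀n : n₀ ≤ n := by omega
  have := (hw (n - n₀)).2
  rw [show n - n₀ + n₀ = n by omega] at this
  exact this
end

section
/- Let f be a transcendental entire function, R > 0 with M(r) > r for r ≥ R, and suppose A_R(f) is a spider's web. Then for every unbounded connected set Γ ⊆ ℂ (in particular every path to infinity), f is unbounded on Γ; that is, there is no path to infinity on which f is bounded. -/
open Complex Filter Set Function

def SpidersWeb (E : Set ℂ) : Prop :=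
  IsConnected E ∧ ∃ G : ℕ → Set ℂ,
    (∀ n, IsOpen (G n) ∧ Bornology.IsBounded (G n) ∧ IsConnected (G n) ∧
      SimplyConnectedSpace (G n) ∧ G n ⊆ G (n + 1) ∧ frontier (G n) ⊆ E) ∧
    (⋃ n, G n) = Set.univ

namespace SW
open Metric Bornology

lemma sphere_set (r : ℝ) : {z : ℂ | ‖z‖ = r} = Metric.sphere (0:ℂ) r := by
  ext z; simp [Complex.dist_eq]

lemma bddAbove_set (f : ℂ → ℂ) (hf : Continuous f) (r : ℝ) :
    BddAbove ((fun z => ‖f z‖) '' {z : ℂ | ‖z‖ = r}) := by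
  rw [sphere_set]
  exact ((isCompact_sphere (0:ℂ) r).image (continuous_norm.comp hf)).bddAbove

lemma nonempty_set (f : ℂ → ℂ) {r : ℝ} (hr : 0 ≤ r) :
    ((fun z => ‖f z‖) '' {z : ℂ | ‖z‖ = r}).Nonempty := by
  refine ⟨‖f (r:ℂ)‖, ⟨(r:ℂ), ?_, rfl⟩⟩
  simpa [Complex.norm_real] using _root_.abs_of_nonneg hr

lemma abs_f_le_maxMod {f : ℂ → ℂ} (hf : Continuous f) (z : ℂ) :
    ‖f z‖ ≤ maxMod f (‖z‖) :=
  le_csSup (bddAbove_set f hf _) ⟨z, rfl, rfl⟩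

lemma maxMod_mono {f : ℂ → ℂ} (hf : Differentiable ℂ f) {r s : ℝ} (h0 : 0 ≤ r) (hrs : r ≤ s) :
    maxMod f r ≤ maxMod f s := by
  rcases eq_or_lt_of_le (h0.trans hrs) with h | hs
  · have : r = s := le_antisymm hrs (by rw [← h] at *; exact h0)
    rw [this]
  · apply csSup_le (nonempty_set f h0)
    rintro y ⟨z, hz, rfl⟩
    have hzs : z ∈ closure (Metric.ball (0:ℂ) s) := by
      rw [closure_ball (0:ℂ) (ne_of_gt hs)]
      simp only [mem_closedBall, Complex.dist_eq, sub_zero]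
      rw [hz]; exact hrs
    refine Complex.norm_le_of_forall_mem_frontier_norm_le isBounded_ball
      hf.diffContOnCl (fun w hw => ?_) hzs
    rw [frontier_ball (0:ℂ) (ne_of_gt hs)] at hw
    have hw' : ‖w‖ = s := by
      simpa [Complex.dist_eq] using hw
    exact le_csSup (bddAbove_set f hf.continuous _) ⟨w, hw', rfl⟩

section itM
variable {f : ℂ → ℂ} {R : ℝ}

lemma itM_basic (hR : 0 < R) (hM : ∀ r ≥ R, maxMod f r > r) :
    ∀ m : ℕ, R ≤ (maxMod f)^[m] R ∧ (maxMod f)^[m] R < (maxMod f)^[m+1] R := by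
  intro m
  induction m with
  | zero =>
    refine ⟨le_refl R, ?_⟩
    simpa using hM R (le_refl R)
  | succ m ih =>
    have h1 : R ≤ (maxMod f)^[m+1] R := le_of_lt (lt_of_le_of_lt ih.1 ih.2)
    refine ⟨h1, ?_⟩
    rw [Function.iterate_succ_apply' (maxMod f) (m+1) R]
    exact hM _ h1

lemma itM_strictMono (hR : 0 < R) (hM : ∀ r ≥ R, maxMod f r > r) :
    StrictMono (fun m => (maxMod f)^[m] R) :=
  strictMono_nat_of_lt_succ (fun m => (itM_basic hR hM m).2)

lemma itM_unbounded (hf : Differentiable ℂ f) (hR : 0 < R) (hM : ∀ r ≥ R, maxMod f r > r) :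
    ∀ B : ℝ, ∃ m : ℕ, B < (maxMod f)^[m] R := by
  by_contra h
  push_neg at h
  obtain ⟨B, hB⟩ := h
  have hbdd : BddAbove (Set.range (fun m => (maxMod f)^[m] R)) := by
    refine ⟨B, ?_⟩; rintro y ⟨m, rfl⟩; exact hB m
  have hne : (Set.range (fun m => (maxMod f)^[m] R)).Nonempty := ⟨R, 0, rfl⟩
  set ℓ := sSup (Set.range (fun m => (maxMod f)^[m] R)) with hℓ
  have hle : ∀ m, (maxMod f)^[m] R ≤ ℓ := fun m => le_csSup hbdd ⟨m, rfl⟩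
  have hRℓ : R ≤ ℓ := by simpa using hle 0
  have hℓpos : 0 < ℓ := lt_of_lt_of_le hR hRℓ
  -- every z with |z| < ℓ has |f z| ≤ ℓ
  have key : ∀ z : ℂ, ‖z‖ < ℓ → ‖f z‖ ≤ ℓ := by
    intro z hz
    rcases le_or_gt (‖z‖) R with hzR | hzR
    · have h1 : ‖f z‖ ≤ maxMod f R :=
        (abs_f_le_maxMod hf.continuous z).trans (maxMod_mono hf (norm_nonneg z) hzR)
      have h2 : maxMod f R ≤ ℓ := by
        have := hle 1; simpa using this
      exact h1.trans h2
    · obtain ⟨y, ⟨m, rfl⟩, hy⟩ := exists_lt_of_lt_csSup hne (hz.trans_le (le_refl ℓ))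
      have h1 : ‖f z‖ ≤ maxMod f ((maxMod f)^[m] R) :=
        (abs_f_le_maxMod hf.continuous z).trans
          (maxMod_mono hf (norm_nonneg z) (le_of_lt hy))
      have h2 : maxMod f ((maxMod f)^[m] R) ≤ ℓ := by
        have := hle (m+1)
        rwa [Function.iterate_succ_apply' (maxMod f) m R] at this
      exact h1.trans h2
  -- but maxMod f ℓ > ℓ gives a point contradicting this
  have hMl : ℓ < maxMod f ℓ := hM ℓ hRℓ
  obtain ⟨y, ⟨z₀, hz₀, rfl⟩, hy⟩ :=
    exists_lt_of_lt_csSup (nonempty_set f (le_of_lt hℓpos)) hMl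
  have hz₀' : ‖z₀‖ = ℓ := hz₀
  -- move slightly inward
  have hcont : Continuous (fun t : ℝ => ‖f ((t:ℂ) * z₀)‖) := by
    exact continuous_norm.comp (hf.continuous.comp (by continuity))
  have hopen : IsOpen {t : ℝ | ℓ < ‖f ((t:ℂ) * z₀)‖} :=
    isOpen_lt continuous_const hcont
  have h1mem : (1:ℝ) ∈ {t : ℝ | ℓ < ‖f ((t:ℂ) * z₀)‖} := by
    simpa using hy
  obtain ⟨δ, hδ, hball⟩ := Metric.isOpen_iff.mp hopen 1 h1mem
  set t : ℝ := max 0 (1 - δ/2) with ht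
  have ht0 : 0 ≤ t := le_max_left _ _
  have ht1 : t < 1 := by
    apply max_lt one_pos
    linarith
  have htb : t ∈ Metric.ball (1:ℝ) δ := by
    rw [Metric.mem_ball, Real.dist_eq]
    rw [abs_sub_lt_iff]
    constructor
    · linarith
    · have : 1 - δ/2 ≤ t := le_max_right _ _
      linarith
  have hgt : ℓ < ‖f ((t:ℂ) * z₀)‖ := hball htb
  have habs : ‖(t:ℂ) * z₀‖ < ℓ := by
    rw [norm_mul, Complex.norm_real, Real.norm_eq_abs, _root_.abs_of_nonneg ht0, hz₀']
    calc t * ℓ < 1 * ℓ := by exact mul_lt_mul_of_pos_right ht1 hℓpos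
    _ = ℓ := one_mul ℓ
  exact absurd (key _ habs) (not_le.mpr hgt)

end itM

variable {f : ℂ → ℂ} {R : ℝ}

lemma not_const (hf : TranscendentalEntire f) (c : ℂ) : ¬ (∀ z, f z = c) := by
  intro h
  exact hf.2 ⟨Polynomial.C c, fun z => by simp [h z]⟩

lemma eq_const_of_eqOn_ball (hf : TranscendentalEntire f) {c : ℂ} {r : ℝ} (hr : 0 < r)
    (h : Set.EqOn f (fun _ => c) (Metric.ball (0:ℂ) r)) : False := by
  have han : AnalyticOnNhd ℂ f Set.univ := analyticOnNhd_univ_iff_differentiable.mpr hf.1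
  have heq : ∀ z, f z = c := by
    have := han.eqOn_of_preconnected_of_eventuallyEq (analyticOnNhd_const (v := c))
      isPreconnected_univ (Set.mem_univ (0:ℂ))
      (h.eventuallyEq_of_mem (Metric.ball_mem_nhds 0 hr))
    intro z; exact this (Set.mem_univ z)
  exact not_const hf c heq

/-- there is a point with small modulus and small image -/
lemma exists_small (hf : TranscendentalEntire f) (hR : 0 < R) :
    ∃ a : ℂ, ‖a‖ < R ∧ ‖f a‖ < maxMod f R := by
  by_contra h
  push_neg at h
  have hmax : ∀ a ∈ Metric.ball (0:ℂ) R, ‖f a‖ = maxMod f R := by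
    intro a ha
    have ha' : ‖a‖ < R := by simpa [Complex.dist_eq] using ha
    refine le_antisymm ?_ (h a ha')
    exact (abs_f_le_maxMod hf.1.continuous a).trans
      (maxMod_mono hf.1 (norm_nonneg a) (le_of_lt ha'))
  have hmaxOn : IsMaxOn (norm ∘ f) (Metric.ball (0:ℂ) R) 0 := by
    intro a ha
    show ‖f a‖ ≤ ‖f 0‖
    rw [hmax a ha, hmax 0 (Metric.mem_ball_self hR)]
  have heqOn := Complex.eqOn_of_isPreconnected_of_isMaxOn_norm
    (convex_ball (0:ℂ) R).isPreconnected Metric.isOpen_ball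
    hf.1.differentiableOn (Metric.mem_ball_self hR) hmaxOn
  exact eq_const_of_eqOn_ball hf hR heqOn

lemma isOpen_image_of_isOpen (hf : TranscendentalEntire f) {U : Set ℂ} (hU : IsOpen U) :
    IsOpen (f '' U) := by
  have han : AnalyticOnNhd ℂ f Set.univ := analyticOnNhd_univ_iff_differentiable.mpr hf.1
  rcases han.is_constant_or_isOpen isPreconnected_univ with h | h
  · obtain ⟨w, hw⟩ := h
    exact absurd (fun z => hw z (Set.mem_univ z)) (not_const hf w)
  · exact h U (Set.subset_univ U) hU

lemma isPreconnected_exterior {ρ : ℝ} (hρ : 0 ≤ ρ) :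
    IsPreconnected {z : ℂ | ρ < ‖z‖} := by
  have : {z : ℂ | ρ < ‖z‖} =
      (fun p : ℝ × ℝ => (p.1 : ℂ) * Complex.exp ((p.2 : ℂ) * Complex.I)) ''
        (Set.Ioi ρ ×ˢ Set.univ) := by
    ext z
    constructor
    · intro hz
      refine ⟨(‖z‖, Complex.arg z), ⟨hz, Set.mem_univ _⟩, ?_⟩
      simp only
      exact Complex.norm_mul_exp_arg_mul_I z
    · rintro ⟨⟨t, θ⟩, ⟨ht, -⟩, rfl⟩
      simp only [Set.mem_setOf_eq, norm_mul, Complex.norm_real, Real.norm_eq_abs, Complex.norm_exp]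
      have : ((θ:ℂ) * Complex.I).re = 0 := by simp
      rw [this]
      simp only [Real.exp_zero, mul_one]
      rw [_root_.abs_of_nonneg (le_of_lt (lt_of_le_of_lt hρ ht))]
      exact ht
  rw [this]
  apply IsPreconnected.image
  · exact (isPreconnected_Ioi.prod isPreconnected_univ)
  · apply Continuous.continuousOn
    continuity

lemma not_isBounded_exterior {ρ : ℝ} (hρ : 0 ≤ ρ) :
    ¬ IsBounded {z : ℂ | ρ < ‖z‖} := by
  intro h
  obtain ⟨C, hC⟩ := isBounded_iff_forall_norm_le.mp h
  set x : ℂ := ((ρ + |C| + 1 : ℝ) : ℂ) with hx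
  have hmem : x ∈ {z : ℂ | ρ < ‖z‖} := by
    simp only [Set.mem_setOf_eq, hx, Complex.norm_real, Real.norm_eq_abs]
    have : 0 ≤ ρ + |C| + 1 := by positivity
    rw [_root_.abs_of_nonneg this]
    have := abs_nonneg C
    linarith
  have := hC x hmem
  rw [hx] at this
  simp only [Complex.norm_real, Real.norm_eq_abs] at this
  have h0 : 0 ≤ ρ + |C| + 1 := by positivity
  rw [_root_.abs_of_nonneg h0] at this
  have := le_abs_self C
  linarith

/-- crossing lemma -/
lemma cross {Γ U : Set ℂ} (hΓ : IsPreconnected Γ) (hU : IsOpen U)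
    (h1 : (Γ ∩ U).Nonempty) (h2 : (Γ \ closure U).Nonempty) :
    (Γ ∩ frontier U).Nonempty := by
  by_contra h
  rw [Set.not_nonempty_iff_eq_empty] at h
  have hcov : Γ ⊆ U ∪ (closure U)ᶜ := by
    intro z hz
    by_cases hzU : z ∈ U
    · exact Or.inl hzU
    · by_cases hzc : z ∈ closure U
      · exfalso
        have : z ∈ Γ ∩ frontier U := ⟨hz, hzc, by rwa [hU.interior_eq]⟩
        rw [h] at this; exact this
      · exact Or.inr hzc
  have h2' : (Γ ∩ (closure U)ᶜ).Nonempty := by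
    obtain ⟨y, hy1, hy2⟩ := h2; exact ⟨y, hy1, hy2⟩
  obtain ⟨w, hwΓ, hw⟩ := hΓ U (closure U)ᶜ hU (isClosed_closure.isOpen_compl) hcov h1 h2'
  exact hw.2 (subset_closure hw.1)

/-- the `m`-th level set, with natural-number indexing -/
def AS (f : ℂ → ℂ) (R : ℝ) (m : ℕ) : Set ℂ :=
  {z | ∀ n : ℕ, (maxMod f)^[n + m] R ≤ ‖f^[n] z‖}

lemma ALevel_zero_eq (f : ℂ → ℂ) (R : ℝ) : ALevel f R 0 = AS f R 0 := by
  ext z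
  constructor
  · intro h n
    have := h n (by positivity)
    simpa using this
  · intro h n _
    simpa using h n

lemma AS_step {f : ℂ → ℂ} {R : ℝ} {m : ℕ} {z : ℂ} (h : z ∈ AS f R m) :
    f z ∈ AS f R (m+1) := by
  intro n
  have h' := h (n+1)
  rw [Function.iterate_succ_apply] at h'
  have he : n + 1 + m = n + (m + 1) := by omega
  rwa [he] at h'

lemma AS_abs_ge {f : ℂ → ℂ} {R : ℝ} {m : ℕ} {z : ℂ} (h : z ∈ AS f R m) :
    (maxMod f)^[m] R ≤ ‖z‖ := by
  have := h 0
  simpa using this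

/-- the key induction: arbitrarily high-level loops around growing balls -/
lemma loops {f : ℂ → ℂ} {R : ℝ} (hf : TranscendentalEntire f) (hR : 0 < R)
    (hM : ∀ r ≥ R, maxMod f r > r) (hsw : SpidersWeb (ALevel f R 0)) :
    ∀ m : ℕ, ∃ U : Set ℂ, IsOpen U ∧ IsBounded U ∧
      Metric.ball (0:ℂ) ((maxMod f)^[m] R) ⊆ U ∧ frontier U ⊆ AS f R m := by
  obtain ⟨a, haR, hafR⟩ := exists_small hf hR
  obtain ⟨-, G, hG, hGcov⟩ := hsw
  have hGmono : Monotone G := monotone_nat_of_le_succ (fun n => (hG n).2.2.2.2.1)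
  intro m
  induction m with
  | zero =>
    -- find G n containing the closed ball of radius R
    have hcompact : IsCompact (Metric.closedBall (0:ℂ) R) := isCompact_closedBall _ _
    have hcover : Metric.closedBall (0:ℂ) R ⊆ ⋃ n, G n := by rw [hGcov]; exact Set.subset_univ _
    obtain ⟨t, ht⟩ := hcompact.elim_finite_subcover G (fun n => (hG n).1) hcover
    by_cases hte : t.Nonempty
    · set N := t.max' hte with hN
      refine ⟨G N, (hG N).1, (hG N).2.1, ?_, ?_⟩
      · refine Set.Subset.trans ?_ (Set.Subset.trans ht ?_)
        · simp only [Function.iterate_zero, id]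
          exact Metric.ball_subset_closedBall
        · intro z hz
          rw [Set.mem_iUnion] at hz
          obtain ⟨i, hi⟩ := hz
          rw [Set.mem_iUnion] at hi
          obtain ⟨hit, hzi⟩ := hi
          exact hGmono (t.le_max' i hit) hzi
      · rw [← ALevel_zero_eq]
        exact (hG N).2.2.2.2.2
    · exfalso
      rw [Finset.not_nonempty_iff_eq_empty] at hte
      have : (0:ℂ) ∈ Metric.closedBall (0:ℂ) R := by
        simp [le_of_lt hR]
      have := ht this
      simp [hte] at this
  | succ m ih =>
    obtain ⟨U, hUo, hUb, hUball, hUfr⟩ := ih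
    set r1 : ℝ := (maxMod f)^[m+1] R with hr1
    have hRm : R ≤ (maxMod f)^[m] R := (itM_basic hR hM m).1
    have hRm1 : R ≤ r1 := (itM_basic hR hM (m+1)).1
    have hr1pos : 0 < r1 := lt_of_lt_of_le hR hRm1
    -- a is inside U
    have haU : a ∈ U := hUball (by
      simp only [Metric.mem_ball, Complex.dist_eq, sub_zero]
      exact lt_of_lt_of_le haR hRm)
    -- K = f(frontier U) ⊆ AS (m+1), compact
    set K : Set ℂ := f '' (frontier U) with hK
    have hfrc : IsCompact (frontier U) :=
      (hUb.isCompact_closure).of_isClosed_subset isClosed_frontier frontier_subset_closure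
    have hKc : IsCompact K := hfrc.image hf.1.continuous
    have hKA : K ⊆ AS f R (m+1) := by
      rintro w ⟨z, hz, rfl⟩
      exact AS_step (hUfr hz)
    have hKfar : ∀ w ∈ K, r1 ≤ ‖w‖ := fun w hw => AS_abs_ge (hKA hw)
    -- V = f(U) is open, bounded; frontier V ⊆ K
    set V : Set ℂ := f '' U with hV
    have hVo : IsOpen V := isOpen_image_of_isOpen hf hUo
    have hclUc : IsCompact (closure U) := hUb.isCompact_closure
    have hfclU : IsCompact (f '' closure U) := hclUc.image hf.1.continuous
    have hVsub : closure V ⊆ f '' closure U := by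
      apply closure_minimal _ hfclU.isClosed
      exact Set.image_mono subset_closure
    have hfrV : frontier V ⊆ K := by
      intro w hw
      have hw1 : w ∈ closure V := hw.1
      have hw2 : w ∉ V := by
        intro hwV
        exact hw.2 (by rwa [hVo.interior_eq])
      obtain ⟨z, hz, rfl⟩ := hVsub hw1
      have hzU : z ∉ U := fun hzU => hw2 ⟨z, hzU, rfl⟩
      have : z ∈ frontier U := by
        rw [hUo.frontier_eq]
        exact ⟨hz, hzU⟩
      exact ⟨z, this, rfl⟩
    -- f a ∈ V, |f a| < r1
    have hfaV : f a ∈ V := ⟨a, haU, rfl⟩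
    have hfa1 : ‖f a‖ < r1 := by
      have h1 : maxMod f R ≤ r1 := by
        have := (itM_strictMono hR hM).monotone (show 1 ≤ m + 1 by omega)
        simpa only [Function.iterate_one] using this
      exact lt_of_lt_of_le hafR h1
    have hfaK : f a ∈ Kᶜ := by
      intro hfaK
      exact absurd (hKfar _ hfaK) (not_le.mpr hfa1)
    -- D = component of f a in Kᶜ is inside V, hence bounded
    set D : Set ℂ := connectedComponentIn Kᶜ (f a) with hD
    have hKco : IsOpen Kᶜ := hKc.isClosed.isOpen_compl
    have hDo : IsOpen D := hKco.connectedComponentIn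
    have hDK : D ⊆ Kᶜ := connectedComponentIn_subset _ _
    have hDfa : f a ∈ D := mem_connectedComponentIn hfaK
    have hDV : D ⊆ V := by
      by_contra hnot
      obtain ⟨y, hyD, hyV⟩ := Set.not_subset.mp hnot
      have hyc : y ∉ closure V := by
        intro hyc
        have : y ∈ frontier V := ⟨hyc, by rwa [hVo.interior_eq]⟩
        exact hDK hyD (hfrV this)
      obtain ⟨w, hwD, hwfr⟩ := cross isPreconnected_connectedComponentIn hVo
        ⟨f a, hDfa, hfaV⟩ ⟨y, hyD, hyc⟩
      exact hDK hwD (hfrV hwfr)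
    have hDb : IsBounded D := (hfclU.isBounded).subset (hDV.trans (Set.image_mono subset_closure))
    -- ball(0, r1) ⊆ D
    have hballK : Metric.ball (0:ℂ) r1 ⊆ Kᶜ := by
      intro w hw
      simp only [Metric.mem_ball, Complex.dist_eq, sub_zero] at hw
      intro hwK
      exact absurd (hKfar w hwK) (not_le.mpr hw)
    have hfaball : f a ∈ Metric.ball (0:ℂ) r1 := by
      simp only [Metric.mem_ball, Complex.dist_eq, sub_zero]
      exact hfa1
    have hballD : Metric.ball (0:ℂ) r1 ⊆ D :=
      (convex_ball (0:ℂ) r1).isPreconnected.subset_connectedComponentIn hfaball hballK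
    -- T = fill of K
    set T : Set ℂ := {w : ℂ | IsBounded (connectedComponentIn Kᶜ w)} with hT
    have hKT : K ⊆ T := by
      intro w hw
      have : connectedComponentIn Kᶜ w = ∅ := connectedComponentIn_eq_empty (by simpa using hw)
      simp only [hT, Set.mem_setOf_eq, this]
      exact isBounded_empty
    have hcompT : ∀ w ∉ K, w ∈ T → connectedComponentIn Kᶜ w ⊆ T := by
      intro w hw hwT y hy
      have : connectedComponentIn Kᶜ y = connectedComponentIn Kᶜ w := (connectedComponentIn_eq hy).symm
      simp only [hT, Set.mem_setOf_eq, this]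
      exact hwT
    have hDT : D ⊆ T := by
      have hfaT : f a ∈ T := hDb
      exact hcompT (f a) hfaK hfaT
    -- T is bounded
    obtain ⟨ρ, hρ⟩ := hKc.isBounded.subset_closedBall 0
    set ρ' : ℝ := max ρ 0 with hρ'
    have hρ'0 : 0 ≤ ρ' := le_max_right _ _
    have hKball : K ⊆ Metric.closedBall 0 ρ' :=
      hρ.trans (Metric.closedBall_subset_closedBall (le_max_left _ _))
    have hExtK : {z : ℂ | ρ' < ‖z‖} ⊆ Kᶜ := by
      intro z hz hzK
      have := hKball hzK
      simp only [Metric.mem_closedBall, Complex.dist_eq, sub_zero] at this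
      exact absurd this (not_le.mpr hz)
    have hTb : T ⊆ Metric.closedBall (0:ℂ) ρ' := by
      intro w hwT
      simp only [Metric.mem_closedBall, Complex.dist_eq, sub_zero]
      by_contra hcon
      push_neg at hcon
      have hwExt : w ∈ {z : ℂ | ρ' < ‖z‖} := hcon
      have hsub : {z : ℂ | ρ' < ‖z‖} ⊆ connectedComponentIn Kᶜ w :=
        (isPreconnected_exterior hρ'0).subset_connectedComponentIn hwExt hExtK
      have hwT' : IsBounded (connectedComponentIn Kᶜ w) := hwT
      exact not_isBounded_exterior hρ'0 (hwT'.subset hsub)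
    -- T is closed
    have hTc : IsClosed T := by
      rw [← isOpen_compl_iff]
      rw [isOpen_iff_mem_nhds]
      intro w hw
      have hwK : w ∉ K := fun hwK => hw (hKT hwK)
      have hwmem : w ∈ connectedComponentIn Kᶜ w := mem_connectedComponentIn (by simpa using hwK)
      have hopen : IsOpen (connectedComponentIn Kᶜ w) := hKco.connectedComponentIn
      refine Filter.mem_of_superset (hopen.mem_nhds hwmem) ?_
      intro y hy
      have hy' : connectedComponentIn Kᶜ y = connectedComponentIn Kᶜ w := (connectedComponentIn_eq hy).symm
      intro hyT
      apply hw
      show IsBounded (connectedComponentIn Kᶜ w)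
      rw [← hy']
      exact hyT
    -- conclude
    refine ⟨interior T, isOpen_interior, ?_, ?_, ?_⟩
    · exact (Metric.isBounded_closedBall).subset (interior_subset.trans hTb)
    · have hDint : D ⊆ interior T := interior_maximal hDT hDo
      exact hballD.trans hDint
    · intro x hx
      have hx1 : x ∈ T := by
        have : closure (interior T) ⊆ T := closure_minimal interior_subset hTc
        exact this hx.1
      have hx2 : x ∉ interior T := by
        simpa using hx.2
      by_cases hxK : x ∈ K
      · exact hKA hxK
      · exfalso
        have hxmem : x ∈ connectedComponentIn Kᶜ x := mem_connectedComponentIn (by simpa using hxK)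
        have hsub : connectedComponentIn Kᶜ x ⊆ T := hcompT x hxK hx1
        have : x ∈ interior T := (interior_maximal hsub hKco.connectedComponentIn) hxmem
        exact hx2 this

end SW

theorem unbounded_on_unbounded_connected (f : ℂ → ℂ) (hf : TranscendentalEntire f)
    (R : ℝ) (hR : 0 < R) (hM : ∀ r ≥ R, maxMod f r > r)
    (hsw : SpidersWeb (ALevel f R 0)) :
    ∀ Γ : Set ℂ, IsConnected Γ → ¬ Bornology.IsBounded Γ →
      ¬ Bornology.IsBounded (f '' Γ) := by
  intro Γ hΓ hΓu hb
  obtain ⟨C, hC⟩ := isBounded_iff_forall_norm_le.mp hb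
  obtain ⟨x₀, hx₀⟩ := hΓ.nonempty
  obtain ⟨m, hm⟩ := SW.itM_unbounded hf.1 hR hM (max (‖x₀‖) C)
  obtain ⟨U, hUo, hUb, hUball, hUfr⟩ := SW.loops hf hR hM hsw m
  have hx₀U : x₀ ∈ U := hUball (by
    simp only [Metric.mem_ball, Complex.dist_eq, sub_zero]
    exact lt_of_le_of_lt (le_max_left _ _) hm)
  have hns : ¬ Γ ⊆ closure U := fun hsub => hΓu ((hUb.closure).subset hsub)
  obtain ⟨y, hyΓ, hyc⟩ := Set.not_subset.mp hns
  obtain ⟨z, hzΓ, hzfr⟩ := SW.cross hΓ.isPreconnected hUo ⟨x₀, hx₀, hx₀U⟩ ⟨y, hyΓ, hyc⟩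
  have hzA : z ∈ SW.AS f R m := hUfr hzfr
  have h1 := hzA 1
  rw [show 1 + m = m + 1 from by omega, Function.iterate_one] at h1
  have h2 := hC (f z) ⟨z, hzΓ, rfl⟩
  have h3 : (maxMod f)^[m] R < (maxMod f)^[m+1] R := (SW.itM_basic hR hM m).2
  have h4 : C < (maxMod f)^[m] R := lt_of_le_of_lt (le_max_right _ _) hm
  linarith
end
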